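/- arXiv:math/9704223 — 2 statements merged into one kernel-verified Lean document; each statement's English description precedes it below -/
import Mathlib

section
/- If A ⊂ Z^q represents all types, then either A contains a basis of the real vector space R^q (i.e., a linearly independent subset of size q over R, viewing integer vectors as real vectors), or there exists a subset A_1 ⊂ A with c(A_1) < q such that A_1 represents all types, where c(A_1) is the number of coordinates i for which some vector in A_1 has nonzero i-th entry. -/
/-- A `q`-type is a tuple of signs `±1`. -/
def IsType {q : ℕ} (τ : Fin q → ℤ) : Prop := ∀ i, τ i = 1 ∨ τ i = -1

/-- `a ∈ ℤ^q` represents the `q`-type `τ`: for some `η = ±1`, `sign (a i) = η * τ i`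
whenever `a i ≠ 0`, and `∑ |a i| ≥ 2`. -/
def Represents {q : ℕ} (a τ : Fin q → ℤ) : Prop :=
  (∃ η : ℤ, (η = 1 ∨ η = -1) ∧ ∀ i, a i ≠ 0 → Int.sign (a i) = η * τ i) ∧
  2 ≤ ∑ i, |a i|

/-- A set `A ⊆ ℤ^q` represents all `q`-types. -/
def RepresentsAll {q : ℕ} (A : Set (Fin q → ℤ)) : Prop :=
  ∀ τ : Fin q → ℤ, IsType τ → ∃ a ∈ A, Represents a τ

/-- The support of a set of vectors: coordinates where some vector is nonzero. -/
def supp {q : ℕ} (A : Set (Fin q → ℤ)) : Set (Fin q) := {i | ∃ a ∈ A, a i ≠ 0}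

/-- If `A ⊆ ℤ^q` represents all types, then either `A` contains a basis of `ℝ^q`
(q vectors linearly independent over `ℝ`), or some subset `A₁ ⊆ A` supported on fewer
than `q` coordinates represents all types. -/
theorem representsAll_basis_or_smaller_support {q : ℕ} (A : Set (Fin q → ℤ))
    (hA : RepresentsAll A) :
    (∃ b : Fin q → (Fin q → ℤ), (∀ i, b i ∈ A) ∧
      LinearIndependent ℝ (fun i => fun j => ((b i j : ℝ)))) ∨
    (∃ A₁ ⊆ A, (supp A₁).ncard < q ∧ RepresentsAll A₁) := by
  classical
  set co : (Fin q → ℤ) → (Fin q → ℝ) := fun a => fun j => ((a j : ℝ)) with hco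
  set S : Set (Fin q → ℝ) := co '' A with hSdef
  by_cases hspan : Submodule.span ℝ S = ⊤
  · left
    obtain ⟨s, hsS, hspan', hli⟩ := exists_linearIndependent ℝ S
    have hB : Submodule.span ℝ (Set.range ((↑) : s → (Fin q → ℝ))) = ⊤ := by
      rw [Subtype.range_coe, hspan', hspan]
    let B : Module.Basis s ℝ (Fin q → ℝ) := Module.Basis.mk hli (by rw [hB])
    let e : s ≃ Fin q := B.indexEquiv (Pi.basisFun ℝ (Fin q))
    have hpre : ∀ x : s, ∃ a : Fin q → ℤ, a ∈ A ∧ co a = (x : Fin q → ℝ) := by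
      intro x
      obtain ⟨a, haA, ha⟩ := hsS x.2
      exact ⟨a, haA, ha⟩
    choose g hgA hg using hpre
    refine ⟨fun i => g (e.symm i), fun i => hgA _, ?_⟩
    have : (fun i => fun j => ((g (e.symm i) j : ℝ))) = (fun x : s => (x : Fin q → ℝ)) ∘ e.symm := by
      funext i
      exact hg (e.symm i)
    rw [this]
    exact hli.comp e.symm e.symm.injective
  · right
    obtain ⟨f, hf0, hfker⟩ := Submodule.exists_dual_map_eq_bot_of_lt_top
      (lt_top_iff_ne_top.mpr hspan) inferInstance
    have hfS : ∀ x ∈ Submodule.span ℝ S, f x = 0 := by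
      intro x hx
      have : f x ∈ (Submodule.span ℝ S).map f := Submodule.mem_map_of_mem hx
      rwa [hfker, Submodule.mem_bot] at this
    set lam : Fin q → ℝ := fun i => f (fun j => if i = j then 1 else 0) with hlam
    have hfx : ∀ x : Fin q → ℝ, f x = ∑ i, x i * lam i := by
      intro x
      rw [LinearMap.pi_apply_eq_sum_univ]
      simp [hlam, smul_eq_mul]
    obtain ⟨i₀, hi₀⟩ : ∃ i, lam i ≠ 0 := by
      by_contra h
      push_neg at h
      apply hf0
      apply LinearMap.ext
      intro x
      rw [hfx]
      simp [h]
    set A₁ : Set (Fin q → ℤ) := {a ∈ A | ∀ i, lam i ≠ 0 → a i = 0} with hA₁def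
    refine ⟨A₁, fun a ha => ha.1, ?_, ?_⟩
    · have hss : supp A₁ ⊂ Set.univ := by
        refine (Set.ssubset_univ_iff).mpr ?_
        intro h
        have : i₀ ∈ supp A₁ := h ▸ Set.mem_univ i₀
        obtain ⟨a, haA₁, hai⟩ := this
        exact hai (haA₁.2 i₀ hi₀)
      have := Set.ncard_lt_ncard hss (Set.finite_univ)
      rwa [Set.ncard_univ, Nat.card_eq_fintype_card, Fintype.card_fin] at this
    · intro τ hτ
      set τ' : Fin q → ℤ := fun i => if lam i = 0 then τ i else (if 0 < lam i then 1 else -1)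
        with hτ'
      have hτ'type : IsType τ' := by
        intro i
        by_cases h : lam i = 0 <;> simp only [hτ', h, if_true, if_false, if_pos, if_neg]
        · exact hτ i
        · split <;> simp
      obtain ⟨a, haA, ⟨⟨η, hη, hsig⟩, hsum⟩⟩ := hA τ' hτ'type
      have hηR : (η : ℝ) ≠ 0 := by rcases hη with h | h <;> simp [h]
      have key : ∀ i, (a i : ℝ) * lam i = (η : ℝ) * (|lam i| * |(a i : ℝ)|) := by
        intro i
        by_cases h : a i = 0
        · simp [h]
        · have h1 : (a i : ℤ) = η * τ' i * |a i| := by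
            conv_lhs => rw [← Int.sign_mul_abs (a i)]
            rw [hsig i h]
          have h2 : (τ' i : ℝ) * lam i = |lam i| := by
            by_cases hl : lam i = 0
            · simp [hl]
            · rcases lt_or_gt_of_ne hl with hlt | hgt
              · simp only [hτ', if_neg hl, if_neg (not_lt.mpr hlt.le)]
                push_cast
                rw [abs_of_neg hlt]; ring
              · simp only [hτ', if_neg hl, if_pos hgt]
                push_cast
                rw [abs_of_pos hgt]; ring
          have h1R : (a i : ℝ) = (η : ℝ) * (τ' i : ℝ) * |(a i : ℝ)| := by
            exact_mod_cast h1
          conv_lhs => rw [h1R]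
          rw [show (η:ℝ) * (τ' i : ℝ) * |(a i : ℝ)| * lam i
            = (η:ℝ) * ((τ' i : ℝ) * lam i) * |(a i : ℝ)| by ring, h2]
          ring
      have hfa : (0 : ℝ) = ∑ i, (a i : ℝ) * lam i := by
        rw [← hfx (co a)]
        exact (hfS (co a) (Submodule.subset_span ⟨a, haA, rfl⟩)).symm
      have hzero : ∀ i, lam i ≠ 0 → a i = 0 := by
        have hsum0 : ∑ i, |lam i| * |(a i : ℝ)| = 0 := by
          have h' : ∑ i, (η : ℝ) * (|lam i| * |(a i : ℝ)|) = 0 := by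
            simp_rw [← key]
            exact hfa.symm
          rw [← Finset.mul_sum] at h'
          exact (mul_eq_zero.mp h').resolve_left hηR
        intro i hl
        have := (Finset.sum_eq_zero_iff_of_nonneg (fun i _ =>
          mul_nonneg (abs_nonneg _) (abs_nonneg _))).mp hsum0 i (Finset.mem_univ i)
        rcases mul_eq_zero.mp this with h | h
        · exact absurd (abs_eq_zero.mp h) hl
        · exact_mod_cast abs_eq_zero.mp h
      refine ⟨a, ⟨haA, hzero⟩, ⟨η, hη, fun i hi => ?_⟩, hsum⟩
      have hl : lam i = 0 := by
        by_contra hl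
        exact hi (hzero i hl)
      rw [hsig i hi]
      have hτi : τ' i = τ i := by rw [hτ']; simp [hl]
      rw [hτi]
end

section
/- If A ⊂ Z^q is a minimal set of representatives of all types (A represents all types but no proper subset of A does), then A contains a basis of R^{c(A)}, i.e., A contains c(A) vectors that are linearly independent over R when restricted to the c(A) coordinates on which A is supported. -/
/-- Combinatorial core: a real vector supported on `supp A` and orthogonal to all of `A`
must vanish, when `A` is a minimal set of representatives of all types. -/
lemma key_orth {q : ℕ} (A : Set (Fin q → ℤ)) (hA : RepresentsAll A)
    (hmin : ∀ A' ⊂ A, ¬ RepresentsAll A')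
    (W : Fin q → ℝ) (hsupp : ∀ i, W i ≠ 0 → i ∈ supp A)
    (horth : ∀ a ∈ A, ∑ i, W i * (a i : ℝ) = 0) :
    W = 0 := by
  classical
  by_contra hW
  obtain ⟨j, hWj⟩ : ∃ j, W j ≠ 0 := by
    by_contra h; push_neg at h; exact hW (funext h)
  obtain ⟨a0, ha0A, ha0j⟩ := hsupp j hWj
  have hss : A \ {a0} ⊂ A := by
    constructor
    · exact Set.diff_subset
    · intro hsub
      exact ((hsub ha0A).2 rfl)
  have hnot := hmin _ hss
  rw [RepresentsAll] at hnot
  push_neg at hnot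
  obtain ⟨σ, hσt, hσ⟩ := hnot
  set σ' : Fin q → ℤ := fun i => if W i = 0 then σ i else (if 0 < W i then 1 else -1) with hσ'
  have hσ't : IsType σ' := by
    intro i
    by_cases h : W i = 0
    · simp only [hσ', if_pos h]; exact hσt i
    · simp only [hσ', if_neg h]
      by_cases h2 : 0 < W i
      · left; rw [if_pos h2]
      · right; rw [if_neg h2]
  obtain ⟨b, hbA, ⟨⟨η, hη, hsgn⟩, hsum⟩⟩ := hA σ' hσ't
  -- each term of the orthogonality sum, multiplied by η, is |W i| * |b i|
  have hterm : ∀ i : Fin q, (η : ℝ) * (W i * (b i : ℝ)) = |W i| * |(b i : ℝ)| := by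
    intro i
    by_cases hbi : b i = 0
    · simp [hbi]
    by_cases hWi : W i = 0
    · simp [hWi]
    have hs := hsgn i hbi
    have hb_eq : (b i : ℤ) = Int.sign (b i) * |b i| := (Int.sign_mul_abs (b i)).symm
    have hη2 : (η : ℝ) * (η : ℝ) = 1 := by rcases hη with h | h <;> simp [h]
    have hbr : (b i : ℝ) = (η : ℝ) * (σ' i : ℝ) * |(b i : ℝ)| := by
      rw [show |(b i : ℝ)| = ((|b i| : ℤ) : ℝ) by push_cast; ring]
      rw [show ((b i : ℤ) : ℝ) = ((Int.sign (b i) * |b i| : ℤ) : ℝ) by rw [← hb_eq]]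
      push_cast [hs]
      ring
    have hσ'i : (σ' i : ℝ) = if 0 < W i then 1 else -1 := by
      simp only [hσ', if_neg hWi]
      by_cases h2 : 0 < W i <;> simp [h2]
    rw [hσ'i] at hbr
    set c := |(b i : ℝ)| with hc
    by_cases h2 : 0 < W i
    · rw [if_pos h2] at hbr
      rw [abs_of_pos h2, hbr]
      linear_combination (W i * c) * hη2
    · have h3 : W i < 0 := lt_of_le_of_ne (not_lt.mp h2) hWi
      rw [if_neg h2] at hbr
      rw [abs_of_neg h3, hbr]
      linear_combination (-(W i) * c) * hη2
  have hzero : ∀ i : Fin q, W i ≠ 0 → b i = 0 := by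
    have hsum0 : ∑ i, |W i| * |(b i : ℝ)| = 0 := by
      have h0 := horth b hbA
      calc ∑ i, |W i| * |(b i : ℝ)| = ∑ i, (η : ℝ) * (W i * (b i : ℝ)) :=
            (Finset.sum_congr rfl (fun i _ => (hterm i).symm))
        _ = (η : ℝ) * ∑ i, W i * (b i : ℝ) := by rw [Finset.mul_sum]
        _ = 0 := by rw [h0, mul_zero]
    intro i hWi
    have h1 : ∀ i ∈ Finset.univ, (0:ℝ) ≤ |W i| * |(b i : ℝ)| := by
      intro i _; positivity
    have h2 := (Finset.sum_eq_zero_iff_of_nonneg h1).mp hsum0 i (Finset.mem_univ i)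
    rcases mul_eq_zero.mp h2 with h | h
    · exact absurd (abs_eq_zero.mp h) hWi
    · exact_mod_cast abs_eq_zero.mp h
  -- b represents σ as well
  have hbrep : Represents b σ := by
    refine ⟨⟨η, hη, fun i hbi => ?_⟩, hsum⟩
    have hWi : W i = 0 := by
      by_contra h; exact hbi (hzero i h)
    have hgot := hsgn i hbi
    rwa [show σ' i = σ i by simp [hσ', hWi]] at hgot
  have hbne : b ≠ a0 := fun h => ha0j (h ▸ hzero j hWj)
  exact hσ b ⟨hbA, hbne⟩ hbrep

/-- If `A` is a minimal set of representatives of all types, then `A` contains `c(A)`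
vectors that are linearly independent over `ℝ` when restricted to the support of `A`,
i.e. `A` contains a basis of `ℝ^{c(A)}`. -/
theorem minimal_representsAll_contains_basis {q : ℕ} (A : Set (Fin q → ℤ))
    (hA : RepresentsAll A) (hmin : ∀ A' ⊂ A, ¬ RepresentsAll A') :
    ∃ B : Finset (Fin q → ℤ), ↑B ⊆ A ∧ B.card = (supp A).ncard ∧
      LinearIndependent ℝ (fun (b : B) => fun (i : supp A) => ((b : Fin q → ℤ) i.1 : ℝ)) := by
  classical
  haveI : Fintype (↥(supp A)) := Fintype.ofFinite _
  -- restriction map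
  set f : (Fin q → ℤ) → ((↥(supp A)) → ℝ) :=
    fun a => fun i => ((a i.1 : ℤ) : ℝ) with hf
  -- the restrictions of the members of A span everything
  have hspan : Submodule.span ℝ (f '' A) = ⊤ := by
    by_contra hne
    have hlt : Submodule.span ℝ (f '' A) < ⊤ := lt_top_iff_ne_top.mpr hne
    obtain ⟨φ, hφne, hφ⟩ :=
      Submodule.exists_dual_map_eq_bot_of_lt_top hlt inferInstance
    have hφ0 : ∀ a ∈ A, φ (f a) = 0 := by
      intro a ha
      have hmem : f a ∈ Submodule.span ℝ (f '' A) :=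
        Submodule.subset_span ⟨a, ha, rfl⟩
      have hmem2 := Submodule.mem_map_of_mem (f := φ) hmem
      rw [hφ] at hmem2
      simpa using hmem2
    set w : (↥(supp A)) → ℝ := fun i => φ (fun j => if i = j then 1 else 0) with hw
    set W : Fin q → ℝ := fun i => if h : i ∈ supp A then w ⟨i, h⟩ else 0 with hWdef
    have hsuppW : ∀ i, W i ≠ 0 → i ∈ supp A := by
      intro i hi
      by_contra h
      simp [hWdef, h] at hi
    have horth : ∀ a ∈ A, ∑ i, W i * ((a i : ℤ) : ℝ) = 0 := by
      intro a ha
      have h1 : φ (f a) = ∑ i : (↥(supp A)), W i.1 * ((a i.1 : ℤ) : ℝ) := by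
        rw [LinearMap.pi_apply_eq_sum_univ φ (f a)]
        refine Finset.sum_congr rfl (fun i _ => ?_)
        have : W i.1 = w i := by rw [hWdef]; simp [i.2]
        rw [this, smul_eq_mul, hw, hf]
        ring
      have h2 : ∑ i, W i * ((a i : ℤ) : ℝ)
          = ∑ i : (↥(supp A)), W i.1 * ((a i.1 : ℤ) : ℝ) := by
        rw [← Finset.sum_subtype (Set.toFinset (supp A))
          (fun x => Set.mem_toFinset) (fun i => W i * ((a i : ℤ) : ℝ))]
        refine (Finset.sum_subset (Finset.subset_univ _) ?_).symm
        intro i _ hi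
        have hni : i ∉ supp A := by simpa using hi
        simp [hWdef, hni]
      rw [h2, ← h1, hφ0 a ha]
    have hW0 := key_orth A hA hmin W hsuppW horth
    apply hφne
    have hw0 : ∀ i : (↥(supp A)), w i = 0 := by
      intro i
      have h3 : W i.1 = w i := by rw [hWdef]; simp [i.2]
      rw [← h3, hW0]; rfl
    refine LinearMap.ext fun x => ?_
    rw [LinearMap.zero_apply, LinearMap.pi_apply_eq_sum_univ φ x]
    refine Finset.sum_eq_zero (fun i _ => ?_)
    rw [smul_eq_mul, show φ (fun j => if i = j then 1 else 0) = w i from rfl, hw0 i]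
    simp
  -- extract a linearly independent spanning subset
  obtain ⟨s, hs_sub, hs_span, hs_li⟩ := exists_linearIndependent ℝ (f '' A)
  rw [hspan] at hs_span
  haveI : Finite s := hs_li.finite
  haveI hsfin : Fintype s := Fintype.ofFinite _
  -- s is a basis, so its cardinality is the dimension
  have hbasis : Fintype.card s = (supp A).ncard := by
    let bs : Module.Basis s ℝ ((↥(supp A)) → ℝ) :=
      Module.Basis.mk hs_li (by rw [Subtype.range_coe, hs_span])
    have h1 := Module.finrank_eq_card_basis bs
    rw [Module.finrank_fintype_fun_eq_card] at h1
    rw [← h1]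
    rw [← Nat.card_coe_set_eq, Nat.card_eq_fintype_card]
  -- choose preimages in A
  have hpre : ∀ v ∈ s, ∃ a ∈ A, f a = v := by
    intro v hv
    obtain ⟨a, ha, hfa⟩ := hs_sub hv
    exact ⟨a, ha, hfa⟩
  choose g hgA hgf using hpre
  set B : Finset (Fin q → ℤ) := (Set.toFinset s).attach.image
    (fun v => g v.1 (Set.mem_toFinset.mp v.2)) with hB
  have hmemB : ∀ b ∈ B, ∃ v : s, g v.1 v.2 = b := by
    intro b hb
    rw [hB, Finset.mem_image] at hb
    obtain ⟨v, _, hv2⟩ := hb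
    exact ⟨⟨v.1, Set.mem_toFinset.mp v.2⟩, hv2⟩
  have hBsubA : (↑B : Set (Fin q → ℤ)) ⊆ A := by
    intro b hb
    obtain ⟨v, hv⟩ := hmemB b hb
    exact hv ▸ hgA v.1 v.2
  have hfB : ∀ b ∈ B, f b ∈ s ∧ ∀ h : f b ∈ s, g (f b) h = b := by
    intro b hb
    obtain ⟨v, hv⟩ := hmemB b hb
    have hfb : f b = v.1 := by rw [← hv, hgf v.1 v.2]
    constructor
    · rw [hfb]; exact v.2
    · intro h
      have hxv : (⟨f b, h⟩ : s) = v := Subtype.ext hfb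
      calc g (f b) h = g v.1 v.2 := congrArg (fun x : s => g x.1 x.2) hxv
        _ = b := hv
  have hcard : B.card = (supp A).ncard := by
    rw [hB, Finset.card_image_of_injective]
    · rw [Finset.card_attach, Set.toFinset_card, hbasis]
    · intro v1 v2 hv
      have h1 : f (g v1.1 (Set.mem_toFinset.mp v1.2)) = v1.1 := hgf _ _
      have h2 : f (g v2.1 (Set.mem_toFinset.mp v2.2)) = v2.1 := hgf _ _
      apply Subtype.ext
      rw [← h1, ← h2]
      exact congrArg f hv
  refine ⟨B, hBsubA, hcard, ?_⟩
  -- linear independence of the restricted family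
  have he : ∀ b : B, f b.1 ∈ s := fun b => (hfB b.1 b.2).1
  let e : B → s := fun b => ⟨f b.1, he b⟩
  have he_inj : Function.Injective e := by
    intro b1 b2 h
    have h' : f b1.1 = f b2.1 := congrArg Subtype.val h
    apply Subtype.ext
    have k1 := (hfB b1.1 b1.2).2 (he b1)
    have k2 := (hfB b2.1 b2.2).2 (he b2)
    rw [← k1, ← k2]
    exact congrArg (fun x : s => g x.1 x.2) h
  have hli2 := hs_li.comp e he_inj
  have : (fun (b : B) => fun (i : supp A) => ((b : Fin q → ℤ) i.1 : ℝ))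
      = (Subtype.val ∘ e) := by
    funext b
    rfl
  rw [this]
  exact hli2
end
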